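/- arXiv:1304.0223 — 3 statements merged into one kernel-verified Lean document; each statement's English description precedes it below -/
import Mathlib

section
/- Every invertible 4×4 real matrix A with rows (1, a₀₁, a₀₂, a₀₃), (0, a₁₁, 0, a₁₃), (0, 0, a₁₁, a₂₃), (0, 0, 0, a₃₃) (with a₁₁ ≠ 0, a₃₃ ≠ 0) factors uniquely as the product D·S·H·T, where D = diag(1, 1, 1, a₃₃/a₁₁), S is the matrix with rows (1,0,0,0), (0,1,0,a₁₃/a₁₁), (0,0,1,a₂₃/a₁₁), (0,0,0,1), H = diag(1, a₁₁, a₁₁, a₁₁), and T has rows (1, a₀₁, a₀₂, a₀₃), (0,1,0,0), (0,0,1,0), (0,0,0,1). -/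
set_option maxHeartbeats 1000000 in
/-- Every invertible matrix of type (I) (so `a₁₁ ≠ 0`, `a₃₃ ≠ 0`) factors uniquely as
`D·S·H·T` (perspective affinity, shear, stretching, translation) as in (4). -/
theorem stmt3 (a01 a02 a03 a11 a13 a23 a33 : ℝ) (h11 : a11 ≠ 0) (h33 : a33 ≠ 0) :
    ((!![1, a01, a02, a03; 0, a11, 0, a13; 0, 0, a11, a23; 0, 0, 0, a33] :
        Matrix (Fin 4) (Fin 4) ℝ) =
      !![1, 0, 0, 0; 0, 1, 0, 0; 0, 0, 1, 0; 0, 0, 0, a33 / a11] *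
      !![1, 0, 0, 0; 0, 1, 0, a13 / a11; 0, 0, 1, a23 / a11; 0, 0, 0, 1] *
      !![1, 0, 0, 0; 0, a11, 0, 0; 0, 0, a11, 0; 0, 0, 0, a11] *
      !![1, a01, a02, a03; 0, 1, 0, 0; 0, 0, 1, 0; 0, 0, 0, 1]) ∧
    ∀ d s13 s23 h t01 t02 t03 : ℝ,
      (!![1, a01, a02, a03; 0, a11, 0, a13; 0, 0, a11, a23; 0, 0, 0, a33] :
          Matrix (Fin 4) (Fin 4) ℝ) =
        !![1, 0, 0, 0; 0, 1, 0, 0; 0, 0, 1, 0; 0, 0, 0, d] *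
        !![1, 0, 0, 0; 0, 1, 0, s13; 0, 0, 1, s23; 0, 0, 0, 1] *
        !![1, 0, 0, 0; 0, h, 0, 0; 0, 0, h, 0; 0, 0, 0, h] *
        !![1, t01, t02, t03; 0, 1, 0, 0; 0, 0, 1, 0; 0, 0, 0, 1] →
      d = a33 / a11 ∧ s13 = a13 / a11 ∧ s23 = a23 / a11 ∧ h = a11 ∧
        t01 = a01 ∧ t02 = a02 ∧ t03 = a03 := by
  constructor
  · ext i j
    fin_cases i <;> fin_cases j <;>
      simp [Matrix.mul_apply, Fin.sum_univ_four, Matrix.vecHead, Matrix.vecTail] <;> field_simp <;> ring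
  · intro d s13 s23 h t01 t02 t03 heq
    have key : ∀ i j, (!![1, a01, a02, a03; 0, a11, 0, a13; 0, 0, a11, a23; 0, 0, 0, a33] :
        Matrix (Fin 4) (Fin 4) ℝ) i j =
        (!![1, 0, 0, 0; 0, 1, 0, 0; 0, 0, 1, 0; 0, 0, 0, d] *
        !![1, 0, 0, 0; 0, 1, 0, s13; 0, 0, 1, s23; 0, 0, 0, 1] *
        !![1, 0, 0, 0; 0, h, 0, 0; 0, 0, h, 0; 0, 0, 0, h] *
        !![1, t01, t02, t03; 0, 1, 0, 0; 0, 0, 1, 0; 0, 0, 0, 1]) i j := fun i j => by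
      rw [heq]
    have e11 := key 1 1
    have e33 := key 3 3
    have e13 := key 1 3
    have e23 := key 2 3
    have e01 := key 0 1
    have e02 := key 0 2
    have e03 := key 0 3
    simp [Matrix.mul_apply, Fin.sum_univ_four, Matrix.vecHead, Matrix.vecTail] at e11 e33 e13 e23 e01 e02 e03
    subst e11 e01 e02 e03
    refine ⟨?_, ?_, ?_, rfl, rfl, rfl, rfl⟩
    · field_simp at e33 ⊢; linarith
    · field_simp; linarith
    · field_simp; linarith
end

section
/- The cubic parabola D° = {t + t²ε + t³ε² : t ∈ ℝ} ⊆ L is the proper part of a chain of the Laguerre geometry Σ(ℝ, L): explicitly, the image of the standard chain ℙ(ℝ) under the projectivity of ℙ(L) induced by the matrix with rows (1, ε²), (ε, 1) ∈ GL₂(L) (or a suitable matrix in GL₂(L)) has proper part D°, and its unique improper point is L(1, −ε). -/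
open Polynomial

/-- The 3-dimensional real algebra `L = ℝ[X]/(X³)`. -/
noncomputable abbrev L : Type := ℝ[X] ⧸ Ideal.span {(X : ℝ[X]) ^ 3}

/-- `ε`, the residue class of `X` in `L`, so `ε³ = 0`. -/
noncomputable def eps : L := Ideal.Quotient.mk _ X

/-- The natural right action of a `2×2` matrix over `L` on a row pair `(u,v) ∈ L²`. -/
noncomputable def act (p : L × L) (M : Matrix (Fin 2) (Fin 2) L) : L × L :=
  (p.1 * M 0 0 + p.2 * M 1 0, p.1 * M 0 1 + p.2 * M 1 1)

/-- Two admissible pairs represent the same point of `ℙ(L)` iff they differ by a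
unit factor. -/
def pEq (p q : L × L) : Prop := ∃ u : Lˣ, q = ((u : L) * p.1, (u : L) * p.2)

lemma eps_cube : eps ^ 3 = 0 := by
  have : (Ideal.Quotient.mk (Ideal.span {(X : ℝ[X]) ^ 3})) (X ^ 3) = 0 := by
    rw [Ideal.Quotient.eq_zero_iff_mem]
    exact Ideal.subset_span rfl
  rw [eps, ← map_pow]
  exact this

lemma key (t : ℝ) :
    pEq (act (t • (1 : L), 1) !![1, -eps; 0, 1])
      (t • (1 : L) + (t ^ 2) • eps + (t ^ 3) • eps ^ 2, 1) := by
  obtain ⟨a, ha⟩ : ∃ a : L, t • (1 : L) = a := ⟨_, rfl⟩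
  have hsm : ∀ x : L, t • x = a * x := fun x => by
    rw [← ha, smul_mul_assoc, one_mul]
  have hsm2 : ∀ x : L, (t ^ 2) • x = a ^ 2 * x := fun x => by
    simp only [pow_succ, pow_zero, one_smul, mul_smul, hsm]; ring
  have hsm3 : ∀ x : L, (t ^ 3) • x = a ^ 3 * x := fun x => by
    simp only [pow_succ, pow_zero, one_smul, mul_smul, hsm]; ring
  have h3 : eps ^ 3 = 0 := eps_cube
  have hu : (1 + a * eps + a ^ 2 * eps ^ 2) * (1 - a * eps) = 1 := by
    linear_combination (-(a ^ 3)) * h3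
  have hu' : (1 - a * eps) * (1 + a * eps + a ^ 2 * eps ^ 2) = 1 := by
    linear_combination (-(a ^ 3)) * h3
  have m00 : (!![1, -eps; 0, 1] : Matrix (Fin 2) (Fin 2) L) 0 0 = 1 := by simp
  have m01 : (!![1, -eps; 0, 1] : Matrix (Fin 2) (Fin 2) L) 0 1 = -eps := by simp
  have m10 : (!![1, -eps; 0, 1] : Matrix (Fin 2) (Fin 2) L) 1 0 = 0 := by simp
  have m11 : (!![1, -eps; 0, 1] : Matrix (Fin 2) (Fin 2) L) 1 1 = 1 := by simp
  refine ⟨⟨1 + a * eps + a ^ 2 * eps ^ 2, 1 - a * eps, hu, hu'⟩, ?_⟩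
  simp only [act, Units.val_mk, Prod.mk.injEq, m00, m01, m10, m11]
  rw [hsm3, hsm2, ha]
  constructor
  · ring
  · linear_combination (a ^ 3) * h3

/-- The cubic parabola `D° = {t + t²ε + t³ε²}` is the proper part of a chain:
there is a matrix `M ∈ GL₂(L)` whose induced projectivity maps the standard chain
`{L(t,1) : t ∈ ℝ} ∪ {L(1,0)}` onto `{L(t + t²ε + t³ε², 1) : t ∈ ℝ} ∪ {L(1,-ε)}`,
so the unique improper point of this chain is `L(1,-ε)`. -/
theorem stmt16 :
    ∃ M : Matrix (Fin 2) (Fin 2) L, IsUnit M.det ∧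
      (∀ p ∈ ({q : L × L | ∃ t : ℝ, q = (t • (1 : L), 1)} ∪
          {((1 : L), (0 : L))} : Set (L × L)),
        ∃ q ∈ ({q : L × L |
              ∃ t : ℝ, q = (t • (1 : L) + (t ^ 2) • eps + (t ^ 3) • eps ^ 2, 1)} ∪
            {((1 : L), -eps)} : Set (L × L)), pEq (act p M) q) ∧
      (∀ q ∈ ({q : L × L |
            ∃ t : ℝ, q = (t • (1 : L) + (t ^ 2) • eps + (t ^ 3) • eps ^ 2, 1)} ∪
          {((1 : L), -eps)} : Set (L × L)),
        ∃ p ∈ ({q : L × L | ∃ t : ℝ, q = (t • (1 : L), 1)} ∪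
          {((1 : L), (0 : L))} : Set (L × L)), pEq (act p M) q) := by
  refine ⟨!![1, -eps; 0, 1], ?_, ?_, ?_⟩
  · simp [Matrix.det_fin_two_of]
  · rintro p (⟨t, rfl⟩ | hp)
    · exact ⟨_, Or.inl ⟨t, rfl⟩, key t⟩
    · refine ⟨((1 : L), -eps), Or.inr rfl, ?_⟩
      refine ⟨1, ?_⟩
      simp only [Set.mem_singleton_iff] at hp
      subst hp
      simp [act]
  · rintro q (⟨t, rfl⟩ | hq)
    · exact ⟨_, Or.inl ⟨t, rfl⟩, key t⟩
    · refine ⟨((1 : L), (0 : L)), Or.inr rfl, ?_⟩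
      simp only [Set.mem_singleton_iff] at hq
      subst hq
      exact ⟨1, by simp [act]⟩
end

section
/- Let C° = {t + (a₀₂ + a₁₂t)ε + (a₀₃ + a₁₃t + a₃₃t²)ε² : t ∈ ℝ} and C̃° = {t + (ã₀₂ + ã₁₂t)ε + (ã₀₃ + ã₁₃t + ã₃₃t²)ε² : t ∈ ℝ} be two admissible parabolas in L (a₃₃ ≠ 0, ã₃₃ ≠ 0). The parallel projection of C̃° onto the plane of C° along a non-vertical singular direction (i.e., along ε + λε² for some λ ∈ ℝ) is a translate of C° if and only if a₃₃ = ã₃₃. -/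
/-- `L` viewed as real affine 3-space with coordinates `(x₁,x₂,x₃)` for
`x₁ + x₂ε + x₃ε²`. For two admissible parabolas `C°` (coefficients `a..`) and `C̃°`
(coefficients `b..`), the parallel projection of `C̃°` onto the plane of `C°` along
the non-vertical singular direction `ε + λε²` (i.e. `(0,1,λ)`) is a translate of
`C°` if and only if `a₃₃ = ã₃₃`. -/
theorem stmt18 (a02 a12 a03 a13 a33 b02 b12 b03 b13 b33 lam : ℝ)
    (ha : a33 ≠ 0) (hb : b33 ≠ 0) :
    (∃ v : ℝ × ℝ × ℝ,
      {p : ℝ × ℝ × ℝ | ∃ t : ℝ, p = (t, a02 + a12 * t,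
          b03 + b13 * t + b33 * t ^ 2 +
            lam * ((a02 + a12 * t) - (b02 + b12 * t)))} =
      (fun p : ℝ × ℝ × ℝ => (p.1 + v.1, p.2.1 + v.2.1, p.2.2 + v.2.2)) ''
        {p : ℝ × ℝ × ℝ | ∃ t : ℝ, p = (t, a02 + a12 * t,
            a03 + a13 * t + a33 * t ^ 2)}) ↔
    a33 = b33 := by
  constructor
  · rintro ⟨v, hset⟩
    have key : ∀ t : ℝ,
        b03 + b13 * t + b33 * t ^ 2 + lam * ((a02 + a12 * t) - (b02 + b12 * t)) =
          a03 + a13 * (t - v.1) + a33 * (t - v.1) ^ 2 + v.2.2 := by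
      intro t
      have hmem : (t, a02 + a12 * t,
          b03 + b13 * t + b33 * t ^ 2 + lam * ((a02 + a12 * t) - (b02 + b12 * t))) ∈
          (fun p : ℝ × ℝ × ℝ => (p.1 + v.1, p.2.1 + v.2.1, p.2.2 + v.2.2)) ''
            {p : ℝ × ℝ × ℝ | ∃ t : ℝ, p = (t, a02 + a12 * t,
                a03 + a13 * t + a33 * t ^ 2)} := by
        rw [← hset]; exact ⟨t, rfl⟩
      obtain ⟨q, ⟨s, rfl⟩, heq⟩ := hmem
      simp only [Prod.mk.injEq] at heq
      obtain ⟨h1, h2, h3⟩ := heq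
      have hs : s = t - v.1 := by linarith
      rw [← hs, ← h3]
    have e0 := key 0
    have e1 := key 1
    have e2 := key (-1)
    nlinarith [e0, e1, e2]
  · intro hab
    subst hab
    set v1 : ℝ := (a13 - b13 - lam * (a12 - b12)) / (2 * a33) with hv1
    refine ⟨(v1, a12 * v1,
      b03 + lam * (a02 - b02) - (a03 - a13 * v1 + a33 * v1 ^ 2)), ?_⟩
    ext p
    simp only [Set.mem_setOf_eq, Set.mem_image]
    constructor
    · rintro ⟨t, rfl⟩
      refine ⟨(t - v1, a02 + a12 * (t - v1), a03 + a13 * (t - v1) + a33 * (t - v1) ^ 2),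
        ⟨t - v1, rfl⟩, ?_⟩
      simp only [Prod.mk.injEq]
      refine ⟨by ring, by ring, ?_⟩
      rw [hv1]
      field_simp
      ring
    · rintro ⟨q, ⟨t, rfl⟩, rfl⟩
      refine ⟨t + v1, ?_⟩
      simp only [Prod.mk.injEq]
      refine ⟨trivial, by ring, ?_⟩
      rw [hv1]
      field_simp
      ring
end
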